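/- Let φ, φ' : 𝒪_n → 𝒪_n be ℂ-algebra homomorphisms such that φ(𝔪) ⊆ 𝔪 and φ'(𝔪) ⊆ 𝔪. If φ(z_a) = φ'(z_a) for all a = 1, …, n, then φ = φ'. (Such homomorphisms are continuous for the 𝔪-adic topology and hence determined by the images of the coordinate germs.) -/

import Mathlib

open Filter Topology Set

noncomputable section

/-- `ℂⁿ`. -/
abbrev Cn (n : ℕ) : Type := EuclideanSpace ℂ (Fin n)

namespace Filter.Germ

/-- The value at `x` of a germ at the neighbourhood filter of `x`. -/
def valueAt {α β : Type*} [TopologicalSpace α] {x : α} (g : Germ (𝓝 x) β) : β :=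
  g.liftOn (fun f => f x) fun _ _ h => h.eq_of_nhds

@[simp] lemma valueAt_coe {α β : Type*} [TopologicalSpace α] {x : α} (f : α → β) :
    (↑f : Germ (𝓝 x) β).valueAt = f x := rfl

end Filter.Germ

/-- The `ℂ`-algebra structure on germs of `ℂ`-valued functions,
given by the constant functions. -/
instance germAlgebra {α : Type*} (l : Filter α) : Algebra ℂ (Germ l ℂ) :=
  ((Filter.Germ.coeRingHom l).comp (Pi.constRingHom α ℂ)).toAlgebra

/-- `𝒪ₙ`: the ring of germs at the origin of `ℂⁿ` of holomorphic functions, realized as the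
subalgebra of the ring of germs at `𝓝 0` of `ℂ`-valued functions consisting of germs having a
representative that is complex-analytic on a neighbourhood of `0`. -/
def HoloGerm (n : ℕ) : Subalgebra ℂ (Germ (𝓝 (0 : Cn n)) ℂ) where
  carrier := {g | ∃ F : Cn n → ℂ, AnalyticAt ℂ F 0 ∧ (↑F : Germ (𝓝 (0 : Cn n)) ℂ) = g}
  mul_mem' := by
    rintro a b ⟨F, hF, rfl⟩ ⟨G, hG, rfl⟩
    exact ⟨F * G, hF.mul hG, by rw [← Filter.Germ.coe_mul]⟩
  add_mem' := by
    rintro a b ⟨F, hF, rfl⟩ ⟨G, hG, rfl⟩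
    exact ⟨F + G, hF.add hG, by rw [← Filter.Germ.coe_add]⟩
  algebraMap_mem' := fun c => ⟨fun _ => c, analyticAt_const, rfl⟩

lemma valueAt_add {n : ℕ} (a b : Germ (𝓝 (0 : Cn n)) ℂ) :
    (a + b).valueAt = a.valueAt + b.valueAt := by
  induction a using Filter.Germ.inductionOn with
  | h f => induction b using Filter.Germ.inductionOn with
    | h g => rfl

lemma valueAt_mul {n : ℕ} (a b : Germ (𝓝 (0 : Cn n)) ℂ) :
    (a * b).valueAt = a.valueAt * b.valueAt := by
  induction a using Filter.Germ.inductionOn with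
  | h f => induction b using Filter.Germ.inductionOn with
    | h g => rfl

set_option synthInstance.maxHeartbeats 1000000 in
/-- The maximal ideal `𝔪 ⊆ 𝒪ₙ` of germs vanishing at the origin. -/
def mIdeal (n : ℕ) : Ideal (HoloGerm n) where
  carrier := {g | (g : Germ (𝓝 (0 : Cn n)) ℂ).valueAt = 0}
  add_mem' := by
    intro a b ha hb
    show ((a + b : HoloGerm n) : Germ (𝓝 (0 : Cn n)) ℂ).valueAt = 0
    rw [Subalgebra.coe_add, valueAt_add, ha, hb, add_zero]
  zero_mem' := by
    show ((0 : HoloGerm n) : Germ (𝓝 (0 : Cn n)) ℂ).valueAt = 0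
    rw [Subalgebra.coe_zero]
    rfl
  smul_mem' := by
    intro c x hx
    have hx' : ((x : Germ (𝓝 (0 : Cn n)) ℂ)).valueAt = 0 := hx
    show (((c * x : HoloGerm n) : Germ (𝓝 (0 : Cn n)) ℂ)).valueAt = 0
    rw [Subalgebra.coe_mul, valueAt_mul, hx', mul_zero]

/-- The germ `zₐ ∈ 𝒪ₙ` of the `a`-th coordinate function. -/
def coordGerm (n : ℕ) (a : Fin n) : HoloGerm n :=
  ⟨(↑(fun z : Cn n => z a) : Germ (𝓝 (0 : Cn n)) ℂ),
    ⟨fun z : Cn n => z a, (EuclideanSpace.proj (𝕜 := ℂ) a).analyticAt 0, rfl⟩⟩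

-- decomposition of a vector in terms of coordinates
lemma sum_coord_smul_single {n : ℕ} (z : Cn n) :
    ∑ a, z a • EuclideanSpace.single a (1 : ℂ) = z := by
  ext b
  have key : ∀ s : Finset (Fin n),
      (∑ a ∈ s, z a • EuclideanSpace.single a (1 : ℂ)) b
        = ∑ a ∈ s, z a * (if b = a then (1 : ℂ) else 0) := by
    intro s
    induction s using Finset.induction with
    | empty => simp
    | insert x s hx ih =>
      rw [Finset.sum_insert hx, Finset.sum_insert hx, PiLp.add_apply, ih, PiLp.smul_apply,
        EuclideanSpace.single_apply]
      simp
  rw [key]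
  simp

-- 1D: an analytic function vanishing to infinite order vanishes near 0
lemma oneD_vanish {f : ℂ → ℂ} (hf : AnalyticAt ℂ f 0)
    (hb : ∀ k : ℕ, ∃ C : ℝ, ∀ᶠ t in 𝓝 (0 : ℂ), ‖f t‖ ≤ C * ‖t‖ ^ k) :
    ∀ᶠ t in 𝓝 (0 : ℂ), f t = 0 := by
  rcases eq_or_ne (analyticOrderAt f 0) ⊤ with h | h
  · exact analyticOrderAt_eq_top.mp h
  · exfalso
    obtain ⟨m, hm⟩ := WithTop.ne_top_iff_exists.mp h
    obtain ⟨g, hg, hg0, hfg⟩ := (hf.analyticOrderAt_eq_natCast (n := m)).mp hm.symm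
    obtain ⟨C, hC⟩ := hb (m + 1)
    have hpunct : ∀ᶠ t in 𝓝[≠] (0 : ℂ), ‖g t‖ ≤ C * ‖t‖ := by
      filter_upwards [eventually_nhdsWithin_of_eventually_nhds hC,
        eventually_nhdsWithin_of_eventually_nhds hfg, self_mem_nhdsWithin] with t h1 h2 h3
      have ht : t ≠ 0 := h3
      have h4 : ‖t‖ ^ m * ‖g t‖ ≤ ‖t‖ ^ m * (C * ‖t‖) := by
        have := h1
        rw [h2] at this
        simpa [norm_smul, norm_pow, pow_succ, mul_assoc, mul_comm, mul_left_comm] using this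
      have htm : (0 : ℝ) < ‖t‖ ^ m := pow_pos (norm_pos_iff.mpr ht) m
      exact le_of_mul_le_mul_left h4 htm
    have hlim : Tendsto (fun t => ‖g t‖) (𝓝[≠] (0 : ℂ)) (𝓝 ‖g 0‖) :=
      (hg.continuousAt.norm.tendsto).mono_left nhdsWithin_le_nhds
    have hlim0 : Tendsto (fun t : ℂ => C * ‖t‖) (𝓝[≠] (0 : ℂ)) (𝓝 0) := by
      have : Tendsto (fun t : ℂ => C * ‖t‖) (𝓝 (0 : ℂ)) (𝓝 (C * ‖(0 : ℂ)‖)) :=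
        (continuous_norm.tendsto _).const_mul C
      simpa using this.mono_left nhdsWithin_le_nhds
    have : ‖g 0‖ ≤ 0 := le_of_tendsto_of_tendsto hlim hlim0 hpunct
    exact hg0 (norm_le_zero_iff.mp this)

lemma hadamard {n : ℕ} {F : Cn n → ℂ} (hF : AnalyticAt ℂ F 0) :
    ∃ G : Fin n → Cn n → ℂ, (∀ a, AnalyticAt ℂ (G a) 0) ∧
      ∀ᶠ z in 𝓝 (0 : Cn n), F z = F 0 + ∑ a, z a * G a z := by
  obtain ⟨p, r, hp⟩ := hF
  -- the "left-curried" series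
  set q : Fin n → FormalMultilinearSeries ℂ (Cn n) ℂ := fun a m =>
    (p (m + 1)).curryLeft (EuclideanSpace.single a (1 : ℂ)) with hq
  have hqnorm : ∀ a m, ‖q a m‖ ≤ ‖p (m + 1)‖ := by
    intro a m
    calc ‖q a m‖ ≤ ‖(p (m + 1)).curryLeft‖ * ‖EuclideanSpace.single a (1 : ℂ)‖ :=
      ContinuousLinearMap.le_opNorm _ _
    _ = ‖p (m + 1)‖ := by
      rw [ContinuousMultilinearMap.curryLeft_norm, EuclideanSpace.norm_single]
      simp
  -- radius of q is positive
  obtain ⟨ρ, hρpos, hρlt⟩ := ENNReal.lt_iff_exists_nnreal_btwn.mp hp.r_pos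
  have hρrad : (ρ : ENNReal) < p.radius := lt_of_lt_of_le hρlt hp.r_le
  obtain ⟨C, hCpos, hC⟩ := p.norm_mul_pow_le_of_lt_radius hρrad
  have hρR : (0 : ℝ) < (ρ : ℝ) := by exact_mod_cast ENNReal.coe_pos.mp hρpos
  have hqrad : ∀ a, (ρ : ENNReal) ≤ (q a).radius := by
    intro a
    apply (q a).le_radius_of_bound (C / ρ)
    intro m
    have h1 : ‖q a m‖ * (ρ : ℝ) ^ m ≤ ‖p (m + 1)‖ * (ρ : ℝ) ^ m :=
      mul_le_mul_of_nonneg_right (hqnorm a m) (by positivity)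
    have h2 : ‖p (m + 1)‖ * (ρ : ℝ) ^ m = (‖p (m + 1)‖ * (ρ : ℝ) ^ (m + 1)) / ρ := by
      field_simp [pow_succ]; ring
    calc ‖q a m‖ * (ρ : ℝ) ^ m ≤ ‖p (m + 1)‖ * (ρ : ℝ) ^ m := h1
    _ = (‖p (m + 1)‖ * (ρ : ℝ) ^ (m + 1)) / ρ := h2
    _ ≤ C / ρ := by gcongr; exact hC (m + 1)
  have hqpos : ∀ a, 0 < (q a).radius := fun a => lt_of_lt_of_le (by exact_mod_cast hρpos) (hqrad a)
  set G : Fin n → Cn n → ℂ := fun a => (q a).sum with hG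
  have hGball : ∀ a, HasFPowerSeriesOnBall (G a) (q a) 0 (q a).radius := fun a =>
    (q a).hasFPowerSeriesOnBall (hqpos a)
  refine ⟨G, fun a => (hGball a).analyticAt, ?_⟩
  -- now the pointwise identity on a small ball
  have hεmem : EMetric.ball (0 : Cn n) (min r ρ) ∈ 𝓝 (0 : Cn n) := by
    apply EMetric.ball_mem_nhds
    exact lt_min hp.r_pos (by exact_mod_cast hρpos)
  filter_upwards [hεmem] with z hz
  have hzr : z ∈ EMetric.ball (0 : Cn n) r := EMetric.ball_subset_ball (min_le_left _ _) hz
  have hzρ : ∀ a, z ∈ EMetric.ball (0 : Cn n) (q a).radius := fun a =>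
    EMetric.ball_subset_ball (le_trans (min_le_right _ _) (hqrad a)) hz
  -- sums
  have hFz : HasSum (fun m => p m fun _ => z) (F z) := by
    have := hp.hasSum hzr
    simpa using this
  have hGz : ∀ a, HasSum (fun m => q a m fun _ => z) (G a z) := fun a => (q a).hasSum (hzρ a)
  -- termwise identity
  have hterm : ∀ m : ℕ, ∑ a, z a * (q a m fun _ => z) = p (m + 1) fun _ => z := by
    intro m
    have hcurry : ∀ v : Cn n, (p (m + 1)).curryLeft v (fun _ => z)
        = p (m + 1) (Fin.cons v fun _ => z) := fun v =>
      (p (m + 1)).curryLeft_apply v _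
    have step1 : ∀ a, z a * (q a m fun _ => z)
        = ((p (m + 1)).curryLeft (z a • EuclideanSpace.single a (1 : ℂ))) (fun _ => z) := by
      intro a
      rw [map_smul]
      simp [hq]
    rw [Finset.sum_congr rfl (fun a _ => step1 a)]
    have sumL : (∑ a, ((p (m + 1)).curryLeft (z a • EuclideanSpace.single a (1 : ℂ))))
        = (p (m + 1)).curryLeft z := by
      rw [← map_sum, sum_coord_smul_single]
    calc (∑ a, ((p (m + 1)).curryLeft (z a • EuclideanSpace.single a (1 : ℂ))) (fun _ => z))
        = (∑ a, ((p (m + 1)).curryLeft (z a • EuclideanSpace.single a (1 : ℂ)))) (fun _ => z) := by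
          rw [ContinuousMultilinearMap.sum_apply]
    _ = (p (m + 1)).curryLeft z (fun _ => z) := by rw [sumL]
    _ = p (m + 1) (Fin.cons z fun _ => z) := hcurry z
    _ = p (m + 1) (fun _ => z) := by
          congr 1
          funext i
          refine Fin.cases ?_ ?_ i <;> simp
  -- sum over a of the G-series
  have hT : HasSum (fun m => p (m + 1) fun _ => z) (∑ a, z a * G a z) := by
    have := hasSum_sum (s := (Finset.univ : Finset (Fin n)))
      (f := fun a m => z a * (q a m fun _ => z)) (a := fun a => z a * G a z)
      (fun a _ => (hGz a).mul_left (z a))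
    convert this using 1
    funext m
    exact (hterm m).symm
  -- shift the sum for F
  have hshift : HasSum (fun m => p (m + 1) fun _ => z)
      (F z - ∑ i ∈ Finset.range 1, (p i fun _ => z)) :=
    (hasSum_nat_add_iff' 1).mpr hFz
  have hsum_eq : ∑ a, z a * G a z = F z - (p 0 fun _ => z) := by
    have := hT.unique hshift
    simpa using this
  -- identify the constant term
  have hF0 : (p 0 fun _ => z) = F 0 := by
    have h0r : (0 : Cn n) ∈ EMetric.ball (0 : Cn n) r := EMetric.mem_ball_self hp.r_pos
    have hFz0 : HasSum (fun m => p m fun _ => (0 : Cn n)) (F 0) := by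
      have := hp.hasSum h0r
      simpa using this
    have hsingle : HasSum (fun m => p m fun _ => (0 : Cn n)) (p 0 fun _ => (0 : Cn n)) := by
      apply hasSum_single 0
      intro m hm
      obtain ⟨m', rfl⟩ := Nat.exists_eq_succ_of_ne_zero hm
      exact (p (m' + 1)).map_coord_zero 0 rfl
    have h1 : (p 0 fun _ => (0 : Cn n)) = F 0 := hsingle.unique hFz0
    rw [← h1]
    congr 1
    funext i
    exact i.elim0
  rw [hsum_eq, hF0]
  ring

lemma multiD_vanish {n : ℕ} {F : Cn n → ℂ} (hF : AnalyticAt ℂ F 0)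
    (hb : ∀ k : ℕ, ∃ C : ℝ, ∀ᶠ z in 𝓝 (0 : Cn n), ‖F z‖ ≤ C * ‖z‖ ^ k) :
    ∀ᶠ z in 𝓝 (0 : Cn n), F z = 0 := by
  obtain ⟨r, hr, hFr⟩ := hF.exists_ball_analyticOnNhd
  have hmem : Metric.ball (0 : Cn n) r ∈ 𝓝 (0 : Cn n) := Metric.ball_mem_nhds _ hr
  filter_upwards [hmem] with w hw
  rcases eq_or_ne w 0 with rfl | hw0
  · obtain ⟨C, hC⟩ := hb 1
    have h0 := hC.self_of_nhds
    have : ‖F (0 : Cn n)‖ ≤ 0 := by simpa using h0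
    simpa using le_antisymm this (norm_nonneg _)
  · -- slice along the line through w
    set L : ℂ →L[ℂ] Cn n := ContinuousLinearMap.toSpanSingleton ℂ w
    set f : ℂ → ℂ := fun t => F (t • w)
    have hwpos : (0 : ℝ) < ‖w‖ := norm_pos_iff.mpr hw0
    set ρ : ℝ := r / ‖w‖
    have hρ1 : (1 : ℝ) < ρ := (one_lt_div hwpos).mpr (by simpa [Metric.mem_ball] using hw)
    have hmaps : MapsTo L (Metric.ball (0 : ℂ) ρ) (Metric.ball (0 : Cn n) r) := by
      intro t ht
      simp only [Metric.mem_ball, dist_zero_right] at ht ⊢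
      have : ‖L t‖ = ‖t‖ * ‖w‖ := by
        simp [L, ContinuousLinearMap.toSpanSingleton_apply, norm_smul]
      rw [this]
      calc ‖t‖ * ‖w‖ < ρ * ‖w‖ := by gcongr
      _ = r := div_mul_cancel₀ r hwpos.ne'
    have hfan : AnalyticOnNhd ℂ f (Metric.ball (0 : ℂ) ρ) := by
      have : AnalyticOnNhd ℂ (F ∘ L) (Metric.ball (0 : ℂ) ρ) :=
        hFr.comp (L.analyticOnNhd _) hmaps
      exact this
    have h0mem : (0 : ℂ) ∈ Metric.ball (0 : ℂ) ρ := by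
      simp [Metric.mem_ball]; linarith
    have hflocal : ∀ᶠ t in 𝓝 (0 : ℂ), f t = 0 := by
      apply oneD_vanish (hfan 0 h0mem)
      intro k
      obtain ⟨C, hC⟩ := hb k
      refine ⟨C * ‖w‖ ^ k, ?_⟩
      have hcont : Tendsto (fun t : ℂ => t • w) (𝓝 0) (𝓝 (0 : Cn n)) := by
        have := (continuous_id.smul continuous_const :
          Continuous fun t : ℂ => t • w).tendsto 0
        have h2 : Tendsto (fun t : ℂ => t • w) (𝓝 0) (𝓝 ((0 : ℂ) • w)) := this
        simpa using h2
      filter_upwards [hcont.eventually hC] with t ht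
      calc ‖f t‖ ≤ C * ‖t • w‖ ^ k := ht
      _ = C * ‖w‖ ^ k * ‖t‖ ^ k := by rw [norm_smul]; ring
    have : EqOn f 0 (Metric.ball (0 : ℂ) ρ) :=
      hfan.eqOn_zero_of_preconnected_of_eventuallyEq_zero
        ((convex_ball (0:ℂ) ρ).isPreconnected) h0mem (by exact hflocal)
    have h1 : f 1 = 0 := this (by simp [Metric.mem_ball]; linarith)
    simpa [f] using h1

lemma valueAt_sub {n : ℕ} (a b : Germ (𝓝 (0 : Cn n)) ℂ) :
    (a - b).valueAt = a.valueAt - b.valueAt := by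
  induction a using Filter.Germ.inductionOn with
  | h f => induction b using Filter.Germ.inductionOn with
    | h g => rfl

lemma valueAt_coe_eq {n : ℕ} {F : Cn n → ℂ} {x : HoloGerm n}
    (hFx : (↑F : Germ (𝓝 (0 : Cn n)) ℂ) = (x : Germ (𝓝 (0 : Cn n)) ℂ)) :
    F 0 = (x : Germ (𝓝 (0 : Cn n)) ℂ).valueAt := by
  rw [← hFx]
  exact (Filter.Germ.valueAt_coe F).symm

lemma coordGerm_mem_mIdeal {n : ℕ} (a : Fin n) : coordGerm n a ∈ mIdeal n := by
  show ((coordGerm n a : HoloGerm n) : Germ (𝓝 (0 : Cn n)) ℂ).valueAt = 0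
  rfl

/-- every element of `𝔪` is a combination of the coordinate germs -/
lemma mem_m_decomp {n : ℕ} (g : HoloGerm n) (hg : g ∈ mIdeal n) :
    ∃ h : Fin n → HoloGerm n, g = ∑ a, coordGerm n a * h a := by
  obtain ⟨F, hF, hFg⟩ := g.2
  have hF0 : F 0 = 0 := (valueAt_coe_eq hFg).trans hg
  obtain ⟨G, hG, hFeq⟩ := hadamard hF
  refine ⟨fun a => ⟨(↑(G a) : Germ (𝓝 (0 : Cn n)) ℂ), G a, hG a, rfl⟩, ?_⟩
  apply Subtype.ext
  rw [AddSubmonoidClass.coe_finset_sum]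
  show (g : Germ (𝓝 (0 : Cn n)) ℂ) = _
  simp only [Subalgebra.coe_mul]
  have step1 : (g : Germ (𝓝 (0 : Cn n)) ℂ)
      = (↑(fun z : Cn n => ∑ a, z a * G a z) : Germ (𝓝 (0 : Cn n)) ℂ) := by
    rw [← hFg]
    apply (Filter.Germ.coe_eq).mpr
    filter_upwards [hFeq] with z hz
    rw [hz, hF0, zero_add]
  rw [step1]
  have step2 : (fun z : Cn n => ∑ a, z a * G a z)
      = ∑ a, (fun z : Cn n => z a) * (G a) := by
    funext z
    simp [Finset.sum_apply]
  rw [step2, show (↑(∑ a, (fun z : Cn n => z a) * G a) : Germ (𝓝 (0 : Cn n)) ℂ)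
      = ∑ a, (↑((fun z : Cn n => z a) * G a) : Germ (𝓝 (0 : Cn n)) ℂ) from
    map_sum (Filter.Germ.coeRingHom (𝓝 (0 : Cn n))) _ Finset.univ]
  apply Finset.sum_congr rfl
  intro a _
  show (↑((fun z : Cn n => z a) * (G a)) : Germ (𝓝 (0 : Cn n)) ℂ) = _
  rw [Filter.Germ.coe_mul]
  rfl

lemma valueAt_algebraMap {n : ℕ} (c : ℂ) :
    ((algebraMap ℂ (HoloGerm n) c : HoloGerm n) : Germ (𝓝 (0 : Cn n)) ℂ).valueAt = c := rfl

lemma sub_const_mem_mIdeal {n : ℕ} (g : HoloGerm n) :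
    g - algebraMap ℂ (HoloGerm n) ((g : Germ (𝓝 (0 : Cn n)) ℂ).valueAt) ∈ mIdeal n := by
  show ((g - algebraMap ℂ (HoloGerm n) _ : HoloGerm n) : Germ (𝓝 (0 : Cn n)) ℂ).valueAt = 0
  rw [Subalgebra.coe_sub, valueAt_sub, valueAt_algebraMap, sub_self]


set_option synthInstance.maxHeartbeats 1000000
set_option maxHeartbeats 1000000

/-- polynomial approximation modulo powers of `𝔪` -/
lemma approx_mod_pow {n : ℕ} (k : ℕ) (g : HoloGerm n) :
    ∃ P ∈ Algebra.adjoin ℂ (Set.range (coordGerm n)), g - P ∈ (mIdeal n) ^ k := by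
  induction k generalizing g with
  | zero =>
    refine ⟨0, zero_mem _, ?_⟩
    rw [pow_zero, Ideal.one_eq_top]
    trivial
  | succ k ih =>
    set c := algebraMap ℂ (HoloGerm n) ((g : Germ (𝓝 (0 : Cn n)) ℂ).valueAt) with hc
    obtain ⟨h, hh⟩ := mem_m_decomp (g - c) (sub_const_mem_mIdeal g)
    choose P hPadj hPr using fun a => ih (h a)
    refine ⟨c + ∑ a, coordGerm n a * P a, ?_, ?_⟩
    · apply add_mem (Subalgebra.algebraMap_mem _ _)
      apply sum_mem
      intro a _
      exact mul_mem (Algebra.subset_adjoin ⟨a, rfl⟩) (hPadj a)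
    · have key : g - (c + ∑ a, coordGerm n a * P a)
          = ∑ a, coordGerm n a * (h a - P a) := by
        have : g - c = ∑ a, coordGerm n a * h a := hh
        rw [Finset.sum_congr rfl (fun a _ => mul_sub (coordGerm n a) (h a) (P a)),
          Finset.sum_sub_distrib, ← this]
        ring
      rw [key]
      apply Ideal.sum_mem
      intro a _
      rw [pow_succ']
      exact Ideal.mul_mem_mul (coordGerm_mem_mIdeal a) (hPr a)

lemma map_mem_pow {n k : ℕ} (φ : HoloGerm n →ₐ[ℂ] HoloGerm n)
    (hφ : ∀ g ∈ mIdeal n, φ g ∈ mIdeal n)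
    {x : HoloGerm n} (hx : x ∈ (mIdeal n) ^ k) : φ x ∈ (mIdeal n) ^ k := by
  have h1 : Ideal.map φ.toRingHom ((mIdeal n) ^ k) ≤ (mIdeal n) ^ k := by
    rw [Ideal.map_pow]
    apply Ideal.pow_right_mono
    rw [Ideal.map_le_iff_le_comap]
    intro g hg
    exact hφ g hg
  exact h1 (Ideal.mem_map_of_mem _ hx)

lemma mem_pow_bound {n : ℕ} : ∀ k : ℕ, ∀ x : HoloGerm n, x ∈ (mIdeal n) ^ k →
    ∃ (F : Cn n → ℂ) (C : ℝ), 0 ≤ C ∧ AnalyticAt ℂ F 0 ∧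
      (↑F : Germ (𝓝 (0 : Cn n)) ℂ) = (x : Germ (𝓝 (0 : Cn n)) ℂ) ∧
      ∀ᶠ z in 𝓝 (0 : Cn n), ‖F z‖ ≤ C * ‖z‖ ^ k := by
  intro k
  induction k with
  | zero =>
    intro x _
    obtain ⟨F, hF, hFx⟩ := x.2
    refine ⟨F, ‖F 0‖ + 1, by positivity, hF, hFx, ?_⟩
    have htend : Filter.Tendsto (fun z => ‖F z‖) (𝓝 (0 : Cn n)) (𝓝 ‖F 0‖) :=
      hF.continuousAt.norm.tendsto
    have : ∀ᶠ z in 𝓝 (0 : Cn n), ‖F z‖ < ‖F 0‖ + 1 :=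
      htend.eventually_lt_const (by linarith [norm_nonneg (F 0)])
    filter_upwards [this] with z hz
    simpa using hz.le
  | succ k ih =>
    intro x hx
    rw [pow_succ] at hx
    refine Submodule.mul_induction_on hx ?_ ?_
    · intro m hm y hy
      obtain ⟨F1, C1, hC1, hF1, hF1m, hb1⟩ := ih m hm
      obtain ⟨F2, hF2, hF2y⟩ := y.2
      have hF20 : F2 0 = 0 := (valueAt_coe_eq hF2y).trans hy
      have hbig : F2 =O[𝓝 (0 : Cn n)] (fun z => z) := by
        have h := hF2.differentiableAt.isBigO_sub
        simpa [hF20] using h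
      obtain ⟨C2, hC2, hb2⟩ := hbig.exists_nonneg
      have hb2' : ∀ᶠ z in 𝓝 (0 : Cn n), ‖F2 z‖ ≤ C2 * ‖z‖ := hb2.bound
      refine ⟨F1 * F2, C1 * C2, by positivity, hF1.mul hF2, ?_, ?_⟩
      · rw [Filter.Germ.coe_mul, hF1m, hF2y, ← Subalgebra.coe_mul]
      · filter_upwards [hb1, hb2'] with z h1 h2
        have : ‖F1 z * F2 z‖ = ‖F1 z‖ * ‖F2 z‖ := norm_mul _ _
        rw [Pi.mul_apply, this]
        calc ‖F1 z‖ * ‖F2 z‖ ≤ (C1 * ‖z‖ ^ k) * (C2 * ‖z‖) :=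
          mul_le_mul h1 h2 (norm_nonneg _) (by positivity)
        _ = C1 * C2 * ‖z‖ ^ (k + 1) := by ring
    · rintro x y ⟨F1, C1, hC1, hF1, hF1x, hb1⟩ ⟨F2, C2, hC2, hF2, hF2y, hb2⟩
      refine ⟨F1 + F2, C1 + C2, by positivity, hF1.add hF2, ?_, ?_⟩
      · rw [Filter.Germ.coe_add, hF1x, hF2y, ← Subalgebra.coe_add]
      · filter_upwards [hb1, hb2] with z h1 h2
        calc ‖(F1 + F2) z‖ ≤ ‖F1 z‖ + ‖F2 z‖ := norm_add_le _ _
        _ ≤ C1 * ‖z‖ ^ (k + 1) + C2 * ‖z‖ ^ (k + 1) := add_le_add h1 h2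
        _ = (C1 + C2) * ‖z‖ ^ (k + 1) := by ring

lemma eq_zero_of_mem_all_pow {n : ℕ} (x : HoloGerm n)
    (hx : ∀ k : ℕ, x ∈ (mIdeal n) ^ k) : x = 0 := by
  obtain ⟨F, hF, hFx⟩ := x.2
  have hb : ∀ k : ℕ, ∃ C : ℝ, ∀ᶠ z in 𝓝 (0 : Cn n), ‖F z‖ ≤ C * ‖z‖ ^ k := by
    intro k
    obtain ⟨Fk, Ck, _, _, hFkx, hbk⟩ := mem_pow_bound k x (hx k)
    have hFkF : Fk =ᶠ[𝓝 (0 : Cn n)] F := Filter.Germ.coe_eq.mp (hFkx.trans hFx.symm)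
    refine ⟨Ck, ?_⟩
    filter_upwards [hbk, hFkF] with z h1 h2
    rwa [← h2]
  have hzero : ∀ᶠ z in 𝓝 (0 : Cn n), F z = 0 := multiD_vanish hF hb
  apply Subtype.ext
  rw [← hFx, Subalgebra.coe_zero]
  have : (0 : Germ (𝓝 (0 : Cn n)) ℂ) = (↑(fun _ : Cn n => (0 : ℂ)) : Germ (𝓝 (0 : Cn n)) ℂ) := rfl
  rw [this]
  exact Filter.Germ.coe_eq.mpr (by filter_upwards [hzero] with z hz; exact hz)

/-- Let `φ, φ' : 𝒪ₙ → 𝒪ₙ` be `ℂ`-algebra homomorphisms with `φ(𝔪) ⊆ 𝔪` and `φ'(𝔪) ⊆ 𝔪`.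
If `φ(zₐ) = φ'(zₐ)` for all coordinates `a`, then `φ = φ'`. -/
theorem algHom_eq_of_eq_on_coords (n : ℕ) (hn : 1 ≤ n)
    (φ φ' : HoloGerm n →ₐ[ℂ] HoloGerm n)
    (hφ : ∀ g ∈ mIdeal n, φ g ∈ mIdeal n)
    (hφ' : ∀ g ∈ mIdeal n, φ' g ∈ mIdeal n)
    (h : ∀ a : Fin n, φ (coordGerm n a) = φ' (coordGerm n a)) :
    φ = φ' := by
  apply AlgHom.ext
  intro g
  have key : ∀ k : ℕ, φ g - φ' g ∈ (mIdeal n) ^ k := by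
    intro k
    obtain ⟨P, hP, hr⟩ := approx_mod_pow k g
    have hφP : φ P = φ' P := by
      clear hr
      induction hP using Algebra.adjoin_induction with
      | mem x hx => obtain ⟨a, rfl⟩ := hx; exact h a
      | algebraMap r => rw [AlgHom.commutes, AlgHom.commutes]
      | add x y hx hy ihx ihy => rw [map_add, map_add, ihx, ihy]
      | mul x y hx hy ihx ihy => rw [map_mul, map_mul, ihx, ihy]
    have h1 : φ (g - P) ∈ (mIdeal n) ^ k := map_mem_pow φ hφ hr
    have h2 : φ' (g - P) ∈ (mIdeal n) ^ k := map_mem_pow φ' hφ' hr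
    have heq : φ g - φ' g = φ (g - P) - φ' (g - P) := by
      rw [map_sub, map_sub, hφP]
      ring
    rw [heq]
    exact sub_mem h1 h2
  have h0 := eq_zero_of_mem_all_pow _ key
  exact sub_eq_zero.mp h0
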